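/- If (V,⟨·,·,·⟩) is a Jordan supertriple system and β is an even self-morphism of it, then (V, β∘⟨·,·,·⟩, β) is a multiplicative Hom-Jordan supertriple system. -/
import Mathlib


def sgn (K : Type*) [Field K] (i j : ZMod 2) : K := (-1 : K) ^ (i * j).val

def IsBilin (K : Type*) {A : Type*} [Field K] [AddCommGroup A] [Module K A]
    (f : A → A → A) : Prop :=
  (∀ (c : K) (x y : A), f (c • x) y = c • f x y) ∧
  (∀ x x' y : A, f (x + x') y = f x y + f x' y) ∧
  (∀ (c : K) (x y : A), f x (c • y) = c • f x y) ∧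
  (∀ x y y' : A, f x (y + y') = f x y + f x y')

def IsTrilin (K : Type*) {A : Type*} [Field K] [AddCommGroup A] [Module K A]
    (f : A → A → A → A) : Prop :=
  (∀ (c : K) (x y z : A), f (c • x) y z = c • f x y z) ∧
  (∀ x x' y z : A, f (x + x') y z = f x y z + f x' y z) ∧
  (∀ (c : K) (x y z : A), f x (c • y) z = c • f x y z) ∧
  (∀ x y y' z : A, f x (y + y') z = f x y z + f x y' z) ∧
  (∀ (c : K) (x y z : A), f x y (c • z) = c • f x y z) ∧
  (∀ x y z z' : A, f x y (z + z') = f x y z + f x y z')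

def asc {A : Type*} [AddCommGroup A] (mul : A → A → A) (x y z : A) : A :=
  mul (mul x y) z - mul x (mul y z)

def hasc {A : Type*} [AddCommGroup A] (mul : A → A → A) (α : A → A) (x y z : A) : A :=
  mul (mul x y) (α z) - mul (α x) (mul y z)

def br (K : Type*) {A : Type*} [Field K] [AddCommGroup A] [Module K A]
    (mul : A → A → A) (i j : ZMod 2) (x y : A) : A :=
  (2 : K)⁻¹ • (mul x y - sgn K i j • mul y x)

def jp (K : Type*) {A : Type*} [Field K] [AddCommGroup A] [Module K A]
    (mul : A → A → A) (i j : ZMod 2) (x y : A) : A :=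
  (2 : K)⁻¹ • (mul x y + sgn K i j • mul y x)

/-- A multiplicative Hom-Jordan supertriple system structure. -/
structure IsHomJTS (K : Type*) {V : Type*} [Field K] [AddCommGroup V] [Module K V]
    (𝒱 : ZMod 2 → Submodule K V) (T : V → V → V → V) (θ : V → V) : Prop where
  trilin : IsTrilin K T
  grade : ∀ (i j k : ZMod 2) (x y z : V),
    x ∈ 𝒱 i → y ∈ 𝒱 j → z ∈ 𝒱 k → T x y z ∈ 𝒱 (i + j + k)
  theta_smul : ∀ (c : K) (x : V), θ (c • x) = c • θ x
  theta_add : ∀ x y : V, θ (x + y) = θ x + θ y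
  theta_even : ∀ (i : ZMod 2) (x : V), x ∈ 𝒱 i → θ x ∈ 𝒱 i
  mult : ∀ x y z : V, θ (T x y z) = T (θ x) (θ y) (θ z)
  outer : ∀ (i j k : ZMod 2) (x y z : V), x ∈ 𝒱 i → y ∈ 𝒱 j → z ∈ 𝒱 k →
    T x y z = (sgn K i j * sgn K i k * sgn K j k) • T z y x
  hjts : ∀ (i j p q r : ZMod 2) (x y u v w : V),
    x ∈ 𝒱 i → y ∈ 𝒱 j → u ∈ 𝒱 p → v ∈ 𝒱 q → w ∈ 𝒱 r →
    T (θ x) (θ y) (T u v w) - T (T x y u) (θ v) (θ w)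
      = sgn K (i + j) (p + q) •
          (T (θ u) (θ v) (T x y w) - T (θ u) (T v x y) (θ w))

/-- A Jordan supertriple system structure. -/
structure IsJTS (K : Type*) {V : Type*} [Field K] [AddCommGroup V] [Module K V]
    (𝒱 : ZMod 2 → Submodule K V) (T : V → V → V → V) : Prop where
  trilin : IsTrilin K T
  grade : ∀ (i j k : ZMod 2) (x y z : V),
    x ∈ 𝒱 i → y ∈ 𝒱 j → z ∈ 𝒱 k → T x y z ∈ 𝒱 (i + j + k)
  outer : ∀ (i j k : ZMod 2) (x y z : V), x ∈ 𝒱 i → y ∈ 𝒱 j → z ∈ 𝒱 k →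
    T x y z = (sgn K i j * sgn K i k * sgn K j k) • T z y x
  jts : ∀ (i j p q r : ZMod 2) (x y u v w : V),
    x ∈ 𝒱 i → y ∈ 𝒱 j → u ∈ 𝒱 p → v ∈ 𝒱 q → w ∈ 𝒱 r →
    T x y (T u v w) - T (T x y u) v w
      = sgn K (i + j) (p + q) • (T u v (T x y w) - T u (T v x y) w)

/-- Corollary 6.1: Yau twisting of a Jordan supertriple system along an even
self-morphism gives a multiplicative Hom-Jordan supertriple system. -/
theorem stmt12 {K V : Type*} [Field K] [AddCommGroup V] [Module K V]
    (𝒱 : ZMod 2 → Submodule K V) (hds : DirectSum.IsInternal 𝒱)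
    (T : V → V → V → V)
    (hJ : IsJTS K 𝒱 T)
    (β : V → V)
    (hβsmul : ∀ (c : K) (x : V), β (c • x) = c • β x)
    (hβadd : ∀ x y : V, β (x + y) = β x + β y)
    (hβeven : ∀ (i : ZMod 2) (x : V), x ∈ 𝒱 i → β x ∈ 𝒱 i)
    (hβT : ∀ x y z : V, β (T x y z) = T (β x) (β y) (β z)) :
    IsHomJTS K 𝒱 (fun x y z => β (T x y z)) β := by

  obtain ⟨⟨t1,t2,t3,t4,t5,t6⟩, hgrade, houter, hjts⟩ := hJ
  have hβsub : ∀ x y : V, β (x - y) = β x - β y := by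
    intro x y
    have h : x - y = x + (-1 : K) • y := by rw [neg_one_smul]; abel
    rw [h, hβadd, hβsmul, neg_one_smul]; abel
  constructor
  · exact ⟨fun c x y z => by simp only [t1, hβsmul],
      fun x x' y z => by simp only [t2, hβadd],
      fun c x y z => by simp only [t3, hβsmul],
      fun x y y' z => by simp only [t4, hβadd],
      fun c x y z => by simp only [t5, hβsmul],
      fun x y z z' => by simp only [t6, hβadd]⟩
  · intro i j k x y z hx hy hz
    exact hβeven _ _ (hgrade i j k x y z hx hy hz)
  · exact hβsmul
  · exact hβadd
  · exact hβeven
  · intro x y z; rw [hβT]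
  · intro i j k x y z hx hy hz
    rw [houter i j k x y z hx hy hz, hβsmul]
  · intro i j p q r x y u v w hx hy hu hv hw
    have key := hjts i j p q r x y u v w hx hy hu hv hw
    have key2 := congrArg (fun t => β (β t)) key
    simp only [hβsub, hβadd, hβsmul, hβT] at key2 ⊢
    convert key2 using 3
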